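/- Dobinski-type derivative formula for r-Whitney numbers of the second kind: for real a and positive integers m, r, d^n/da^n [ exp(e^{ma}/m + ra) ] = exp(e^{ma}/m + ra) · Σ_{k=0}^{n} W_{m,r}(n,k) e^{mak}, where W_{m,r}(n,k) are the r-Whitney numbers of the second kind. -/

import Mathlib

open Finset

/-- The partial `r`-Bell polynomial `B^{(r)}_{n+r,k+r}(a;b)`, defined by the explicit
formula `(n!/k!) * Σ_{n_1+...+n_{k+r}=n-k} Π_{i=1}^{r} b_{n_i+1}/n_i! *
Π_{i=r+1}^{r+k} a_{n_i+1}/(n_i+1)!`, the sum over `(k+r)`-tuples of naturals. -/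
noncomputable def rBell {A : Type*} [CommRing A] [Algebra ℚ A]
    (r k n : ℕ) (a b : ℕ → A) : A :=
  ((n.factorial : ℚ) / (k.factorial : ℚ)) •
    ∑ f ∈ Finset.Nat.antidiagonalTuple (k + r) (n - k),
      ∏ i : Fin (k + r),
        if (i : ℕ) < r then (((f i).factorial : ℚ))⁻¹ • b (f i + 1)
        else ((((f i) + 1).factorial : ℚ))⁻¹ • a (f i + 1)

/-- The `r`-Whitney numbers of the second kind, via the recurrence
`W(n+1,k) = W(n,k-1) + (km+r) W(n,k)`, `W(0,0) = 1`. -/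
noncomputable def rWhitney2 (m r : ℕ) : ℕ → ℕ → ℝ
  | 0, 0 => 1
  | 0, _ + 1 => 0
  | n + 1, 0 => (r : ℝ) * rWhitney2 m r n 0
  | n + 1, k + 1 => rWhitney2 m r n k + (((k : ℝ) + 1) * m + r) * rWhitney2 m r n (k + 1)

lemma rWhitney2_eq_zero (m r : ℕ) : ∀ n k : ℕ, n < k → rWhitney2 m r n k = 0 := by
  intro n
  induction n with
  | zero =>
    intro k hk
    match k, hk with
    | k + 1, _ => simp [rWhitney2]
  | succ n ih =>
    intro k hk
    match k, hk with
    | k + 1, hk =>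
      have h1 : rWhitney2 m r n k = 0 := ih k (by omega)
      have h2 : rWhitney2 m r n (k + 1) = 0 := ih (k + 1) (by omega)
      simp [rWhitney2, h1, h2]

lemma rWhitney2_key (m r n : ℕ) (E : ℕ → ℝ) :
    ∑ k ∈ range (n + 2), rWhitney2 m r (n + 1) k * E k =
      ∑ k ∈ range (n + 1),
        (rWhitney2 m r n k * E (k + 1) +
          ((r : ℝ) + m * k) * (rWhitney2 m r n k * E k)) := by
  have hB : ∑ k ∈ range (n + 2), ((r : ℝ) + m * k) * (rWhitney2 m r n k * E k)
      = ∑ k ∈ range (n + 1), ((r : ℝ) + m * k) * (rWhitney2 m r n k * E k) := by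
    rw [Finset.sum_range_succ, rWhitney2_eq_zero m r n (n + 1) (by omega)]
    ring
  rw [Finset.sum_add_distrib, ← hB, Finset.sum_range_succ' _ (n + 1),
    Finset.sum_range_succ' _ (n + 1)]
  have hterm : ∀ k ∈ range (n + 1),
      rWhitney2 m r (n + 1) (k + 1) * E (k + 1) =
        rWhitney2 m r n k * E (k + 1) +
          ((r : ℝ) + m * ((k : ℕ) + 1 : ℕ)) * (rWhitney2 m r n (k + 1) * E (k + 1)) := by
    intro k _
    show (rWhitney2 m r n k + (((k : ℝ) + 1) * m + r) * rWhitney2 m r n (k + 1)) * E (k + 1) = _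
    push_cast
    ring
  rw [Finset.sum_congr rfl hterm, Finset.sum_add_distrib]
  show _ + rWhitney2 m r (n + 1) 0 * E 0 = _
  simp only [rWhitney2]
  push_cast
  ring

lemma hasDerivAt_g (m r : ℕ) (hm : 0 < m) (n : ℕ) (x : ℝ) :
    HasDerivAt (fun x : ℝ => Real.exp (Real.exp (m * x) / m + r * x) *
        ∑ k ∈ Finset.range (n + 1), rWhitney2 m r n k * Real.exp (m * x * k))
      (Real.exp (Real.exp (m * x) / m + r * x) *
        ∑ k ∈ Finset.range (n + 2), rWhitney2 m r (n + 1) k * Real.exp (m * x * k)) x := by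
  have hm' : (m : ℝ) ≠ 0 := Nat.cast_ne_zero.mpr hm.ne'
  have hlin : HasDerivAt (fun x : ℝ => (m : ℝ) * x) (m : ℝ) x := by
    simpa using (hasDerivAt_id x).const_mul (m : ℝ)
  have hexp : HasDerivAt (fun x : ℝ => Real.exp (m * x)) (Real.exp (m * x) * m) x :=
    hlin.exp
  have hinner : HasDerivAt (fun x : ℝ => Real.exp (m * x) / m + r * x)
      (Real.exp (m * x) + r) x := by
    have h2 : HasDerivAt (fun x : ℝ => (r : ℝ) * x) (r : ℝ) x := by
      simpa using (hasDerivAt_id x).const_mul (r : ℝ)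
    have := (hexp.div_const (m : ℝ)).add h2
    exact this.congr_deriv (by rw [mul_div_assoc, div_self hm', mul_one])
  have hf : HasDerivAt (fun x : ℝ => Real.exp (Real.exp (m * x) / m + r * x))
      (Real.exp (Real.exp (m * x) / m + r * x) * (Real.exp (m * x) + r)) x := hinner.exp
  have hS : HasDerivAt (fun x : ℝ => ∑ k ∈ Finset.range (n + 1),
        rWhitney2 m r n k * Real.exp (m * x * k))
      (∑ k ∈ Finset.range (n + 1),
        rWhitney2 m r n k * (Real.exp (m * x * k) * ((m : ℝ) * k))) x := by
    apply HasDerivAt.fun_sum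
    intro k _
    exact ((hlin.mul_const (k : ℝ)).exp).const_mul _
  have := hf.mul hS
  refine this.congr_deriv ?_
  symm
  rw [rWhitney2_key m r n (fun k => Real.exp (m * x * k))]
  rw [Finset.mul_sum, Finset.mul_sum, Finset.mul_sum, ← Finset.sum_add_distrib]
  apply Finset.sum_congr rfl
  intro k _
  have hEk : Real.exp ((m : ℝ) * x * ((k : ℕ) + 1 : ℕ)) =
      Real.exp ((m : ℝ) * x * k) * Real.exp ((m : ℝ) * x) := by
    rw [← Real.exp_add]
    congr 1
    push_cast
    ring
  rw [hEk]
  ring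

/-- Dobinski-type derivative formula:
`dⁿ/daⁿ exp(e^{ma}/m + ra) = exp(e^{ma}/m + ra) Σ_{k=0}^{n} W_{m,r}(n,k) e^{mak}`. -/
theorem iteratedDeriv_exp_rWhitney (m r : ℕ) (hm : 0 < m) (hr : 0 < r) (n : ℕ) (a : ℝ) :
    iteratedDeriv n (fun x : ℝ => Real.exp (Real.exp (m * x) / m + r * x)) a =
      Real.exp (Real.exp (m * a) / m + r * a) *
        ∑ k ∈ Finset.range (n + 1), rWhitney2 m r n k * Real.exp (m * a * k) := by
  induction n generalizing a with
  | zero => simp [rWhitney2]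
  | succ n ih =>
    rw [iteratedDeriv_succ, funext ih]
    exact (hasDerivAt_g m r hm n a).deriv
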